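/- Let X be a compact Hausdorff space, Y ⊆ X closed, n a positive integer, p₀ ∈ C(Y, M_n) and q, e ∈ C(X, M_n) projections with p₀ ⊥ q|_Y, and suppose s₀ ∈ C(Y, M_n) satisfies s₀s₀* = p₀ and s₀*s₀ = e|_Y. Then there exist a closed set Z ⊆ X with Y ⊆ int(Z), a projection p ∈ C(Z, M_n) with p|_Y = p₀ and p ⊥ q|_Z, and an element s ∈ C(Z, M_n) satisfying ss* = p, s*s = e|_Z, and s|_Y = s₀. -/

import Mathlib

set_option maxHeartbeats 1000000
set_option synthInstance.maxHeartbeats 1000000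
open scoped Pointwise

lemma proj_commute_cfc {A : Type*} [CStarAlgebra A] (f : ℝ → ℝ) (a e : A)
    (ha : IsSelfAdjoint a) (he : e * e = e) (hes : star e = e)
    (hcomm : e * a = a * e)
    (hf : ContinuousOn f (spectrum ℝ a)) :
    e * cfc f a = cfc f a * e := by
  set u : A := e + e - 1 with hu_def
  have hu_star : star u = u := by simp [hu_def, hes]
  have heu : e * u = e := by
    rw [hu_def, mul_sub, mul_add, he, mul_one]; abel
  have hu_sq : u * u = 1 := by
    nth_rewrite 1 [hu_def]
    rw [sub_mul, add_mul, heu, one_mul, hu_def]; abel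
  let ψ : A →⋆ₐ[ℂ] A :=
  { toFun := fun x => u * x * u
    map_one' := by show u * 1 * u = 1; rw [mul_one, hu_sq]
    map_mul' := fun x y => by
      show u * (x * y) * u = u * x * u * (u * y * u)
      rw [show u * x * u * (u * y * u) = u * x * (u * u) * y * u by noncomm_ring, hu_sq]
      noncomm_ring
    map_zero' := by simp
    map_add' := fun x y => by show u * (x + y) * u = _; noncomm_ring
    commutes' := fun r => by
      show u * algebraMap ℂ A r * u = algebraMap ℂ A r
      rw [Algebra.algebraMap_eq_smul_one, mul_smul_comm, smul_mul_assoc, mul_one, hu_sq]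
    map_star' := fun x => by
      show u * star x * u = star (u * x * u)
      simp [star_mul, hu_star, mul_assoc] }
  have hua : u * a = a * u := by
    rw [hu_def, sub_mul, add_mul, mul_sub, mul_add, hcomm, one_mul, mul_one]
  have hψa : ψ a = a := by
    show u * a * u = a
    rw [hua, mul_assoc, hu_sq, mul_one]
  have hψc : Continuous ψ := by
    show Continuous fun x : A => u * x * u
    fun_prop
  have hmap := StarAlgHomClass.map_cfc (S := ℂ) ψ f a hf hψc ha
    (by show IsSelfAdjoint (ψ a); rw [hψa]; exact ha)
  rw [hψa] at hmap
  have hug : u * cfc f a = cfc f a * u := by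
    have h1 : u * cfc f a * u = cfc f a := hmap
    calc u * cfc f a = u * cfc f a * (u * u) := by rw [hu_sq, mul_one]
      _ = (u * cfc f a * u) * u := by noncomm_ring
      _ = cfc f a * u := by rw [h1]
  set g := cfc f a
  have h2 : e * g + e * g - g = g * e + g * e - g := by
    calc e * g + e * g - g = u * g := by rw [hu_def]; noncomm_ring
      _ = g * u := hug
      _ = g * e + g * e - g := by rw [hu_def]; noncomm_ring
  have h2' : e * g + e * g = g * e + g * e := by
    have := congrArg (· + g) h2
    simpa using this
  have h3 : (2:ℝ) • (e * g) = (2:ℝ) • (g * e) := by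
    rw [two_smul, two_smul]; exact h2'
  exact smul_right_injective A (by norm_num : (2:ℝ) ≠ 0) h3

/-- Polar-decomposition extension lemma in an abstract unital C*-algebra. -/
lemma polar_partial_isometry {A : Type*} [CStarAlgebra A] [Nontrivial A]
    (c e q : A) (he1 : e * e = e) (he2 : star e = e) (hq2 : star q = q)
    (hce : c * e = c) (hqc : q * c = 0)
    (hnorm : ‖star c * c - e‖ ≤ 1 / 2) :
    ∃ s : A, star s * s = e ∧
      (s * star s) * (s * star s) = s * star s ∧
      star (s * star s) = s * star s ∧
      (s * star s) * q = 0 ∧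
      q * s = 0 ∧
      ∀ {B : Type} [CStarAlgebra B] (ψ : A →⋆ₐ[ℂ] B), Continuous ψ →
        ψ (star c * c) = ψ e → ψ s = ψ c := by
  have hec : e * star c = star c := by
    have := congrArg star hce
    rwa [star_mul, he2] at this
  set a : A := star c * c + 1 - e with ha_def
  have hea : e * a = star c * c := by
    have h1 : e * (star c * c) = star c * c := by
      rw [show e * (star c * c) = (e * star c) * c from (mul_assoc e (star c) c).symm, hec]
    rw [ha_def, mul_sub, mul_add, h1, mul_one, he1]; abel
  have hae : a * e = star c * c := by
    have h1 : (star c * c) * e = star c * c := by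
      rw [mul_assoc, hce]
    rw [ha_def, sub_mul, add_mul, h1, one_mul, he1]; abel
  have hcomm_ea : e * a = a * e := by rw [hea, hae]
  have ha_sa : IsSelfAdjoint a := by
    rw [IsSelfAdjoint, ha_def]
    simp only [star_sub, star_add, star_mul, star_star, star_one, he2]
  have hnorm' : ‖a - 1‖ ≤ 1 / 2 := by
    have h1 : a - 1 = star c * c - e := by rw [ha_def]; abel
    rw [h1]; exact hnorm
  have hspec : spectrum ℝ a ⊆ Set.Icc (1/2 : ℝ) (3/2) := by
    intro x hx
    have h1 : x - (1:ℝ) ∈ spectrum ℝ a - {1} := Set.sub_mem_sub hx (Set.mem_singleton 1)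
    rw [spectrum.sub_singleton_eq, map_one] at h1
    have h2 := spectrum.norm_le_norm_of_mem h1
    rw [Real.norm_eq_abs, abs_le] at h2
    constructor <;> [linarith [h2.1]; linarith [h2.2]]
  have hpos : ∀ x ∈ spectrum ℝ a, (0:ℝ) < x := fun x hx => by
    have := (hspec hx).1; linarith
  set f : ℝ → ℝ := fun x => (Real.sqrt x)⁻¹ with hf_def
  have hf : ContinuousOn f (spectrum ℝ a) := by
    apply Real.continuous_sqrt.continuousOn.inv₀
    intro x hx
    exact Real.sqrt_ne_zero'.mpr (hpos x hx)
  have hinv_cont : ContinuousOn (fun x:ℝ => x⁻¹) (spectrum ℝ a) :=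
    ContinuousOn.inv₀ continuousOn_id fun x hx => ne_of_gt (hpos x hx)
  set g : A := cfc f a with hg_def
  have hg_sa : IsSelfAdjoint g := cfc_predicate f a
  set inva : A := cfc (fun x:ℝ => x⁻¹) a with hinva_def
  have hgg : g * g = inva := by
    rw [hg_def, hinva_def, ← cfc_mul f f a hf hf]
    apply cfc_congr
    intro x hx
    show f x * f x = x⁻¹
    simp only [hf_def]
    rw [← mul_inv, Real.mul_self_sqrt (le_of_lt (hpos x hx))]
  have ha_inva : a * inva = 1 := by
    calc a * inva = cfc (fun x:ℝ => x) a * cfc (fun x:ℝ => x⁻¹) a := by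
          rw [cfc_id' ℝ a, hinva_def]
      _ = cfc (fun x:ℝ => x * x⁻¹) a := (cfc_mul _ _ a continuousOn_id hinv_cont).symm
      _ = cfc (fun _:ℝ => (1:ℝ)) a := cfc_congr fun x hx => mul_inv_cancel₀ (ne_of_gt (hpos x hx))
      _ = 1 := cfc_const_one ℝ a
  have hcomm_eg : e * g = g * e := proj_commute_cfc f a e ha_sa he1 he2 hcomm_ea hf
  have hcomm_ag : a * g = g * a := by
    have h := cfc_commute_cfc (fun x:ℝ => x) f a
    rw [cfc_id' ℝ a] at h
    exact h
  have hcomm_bg : (star c * c) * g = g * (star c * c) := by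
    have hb : star c * c = a - 1 + e := by rw [ha_def]; abel
    rw [hb]
    calc (a - 1 + e) * g = a * g - g + e * g := by noncomm_ring
      _ = g * a - g + g * e := by rw [hcomm_ag, hcomm_eg]
      _ = g * (a - 1 + e) := by noncomm_ring
  set s : A := c * g with hs_def
  have hstar_s : star s = g * star c := by
    rw [hs_def, star_mul, hg_sa.star_eq]
  have hss : star s * s = e := by
    calc star s * s = (g * star c) * (c * g) := by rw [hstar_s, hs_def]
      _ = g * (star c * c) * g := by noncomm_ring
      _ = (star c * c) * g * g := by rw [show g * (star c * c) = (star c * c) * g from hcomm_bg.symm]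
      _ = (star c * c) * inva := by rw [mul_assoc, hgg]
      _ = e * a * inva := by rw [hea]
      _ = 1 * e := by rw [mul_assoc, ha_inva, mul_one, one_mul]
      _ = e := one_mul e
  have hse : s * e = s := by
    calc s * e = c * (g * e) := by rw [hs_def, mul_assoc]
      _ = c * e * g := by rw [← hcomm_eg, ← mul_assoc]
      _ = s := by rw [hce, hs_def]
  have hqs : q * s = 0 := by
    rw [hs_def, ← mul_assoc, hqc, zero_mul]
  refine ⟨s, hss, ?_, ?_, ?_, hqs, ?_⟩
  · calc (s * star s) * (s * star s) = s * (star s * s) * star s := by noncomm_ring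
      _ = s * e * star s := by rw [hss]
      _ = s * star s := by rw [hse]
  · rw [star_mul, star_star]
  · have h1 : star s * q = 0 := by
      have h2 : star s * q = star (q * s) := by rw [star_mul q s, hq2]
      rw [h2, hqs, star_zero]
    rw [mul_assoc, h1, mul_zero]
  · intro B _ ψ hψc hψce
    have hψa : ψ a = 1 := by
      rw [ha_def, map_sub, map_add, map_one, hψce]
      abel
    have hψg : ψ g = 1 := by
      have h := StarAlgHomClass.map_cfc (S := ℂ) ψ f a hf hψc ha_sa
        (by show IsSelfAdjoint (ψ a); rw [hψa]; exact (IsSelfAdjoint.one B))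
      rw [hψa, show (1 : B) = algebraMap ℝ B 1 from (map_one _).symm,
        cfc_algebraMap (A := B) (1:ℝ) f] at h
      have hf1 : f 1 = 1 := by simp [hf_def]
      rw [hf1, map_one] at h
      exact h
    rw [hs_def, map_mul, hψg, mul_one]

/-- The n×n complex matrices. -/
abbrev Mat (n : ℕ) := Matrix (Fin n) (Fin n) ℂ

open scoped ComplexOrder in
lemma mat_partial_isometry {n : ℕ} (v : Mat n)
    (hproj : (star v * v) * (star v * v) = star v * v) :
    v * (star v * v) = v := by
  have key : star (v * (star v * v) - v) * (v * (star v * v) - v) = 0 := by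
    have hsa : star (star v * v) = star v * v := by
      simp [star_mul]
    rw [star_sub, star_mul, hsa]
    set w := star v * v with hw
    have expand : (w * star v - star v) * (v * w - v)
        = w * (star v * v) * w - w * (star v * v) - (star v * v) * w + star v * v := by
      noncomm_ring
    rw [expand, ← hw, hproj]
    have : w * w = w := hproj
    rw [this]
    abel
  have h0 : v * (star v * v) - v = 0 :=
    Matrix.conjTranspose_mul_self_eq_zero.mp key
  exact sub_eq_zero.mp h0

/-- A projection in `M_n(ℂ)`: a self-adjoint idempotent. -/
def IsProjMat {n : ℕ} (m : Mat n) : Prop := m * m = m ∧ star m = m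

abbrev BOp (n : ℕ) : Type := EuclideanSpace ℂ (Fin n) →L[ℂ] EuclideanSpace ℂ (Fin n)

/-- Lemma 2.2(2): Let `X` be compact Hausdorff, `Y ⊆ X` closed,
`p₀ ∈ C(Y, M_n)` and `q, e ∈ C(X, M_n)` projections with `p₀ ⊥ q|_Y`, and suppose
`s₀ ∈ C(Y, M_n)` satisfies `s₀s₀* = p₀` and `s₀*s₀ = e|_Y`. Then there are a closed
set `Z ⊆ X` with `Y ⊆ int(Z)`, a projection `p ∈ C(Z, M_n)` with `p|_Y = p₀` and
`p ⊥ q|_Z`, and `s ∈ C(Z, M_n)` with `ss* = p`, `s*s = e|_Z` and `s|_Y = s₀`. -/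
theorem extend_projection_with_partial_isometry
    {X : Type*} [TopologicalSpace X] [CompactSpace X] [T2Space X]
    (Y : Set X) (hY : IsClosed Y) (n : ℕ) (hn : 0 < n)
    (p₀ : C(Y, Mat n)) (hp₀ : ∀ y, IsProjMat (p₀ y))
    (q : C(X, Mat n)) (hq : ∀ x, IsProjMat (q x))
    (e : C(X, Mat n)) (he : ∀ x, IsProjMat (e x))
    (horth : ∀ (x : X) (hx : x ∈ Y), p₀ ⟨x, hx⟩ * q x = 0)
    (s₀ : C(Y, Mat n))
    (hs₀ : ∀ (x : X) (hx : x ∈ Y),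
      s₀ ⟨x, hx⟩ * star (s₀ ⟨x, hx⟩) = p₀ ⟨x, hx⟩ ∧
      star (s₀ ⟨x, hx⟩) * s₀ ⟨x, hx⟩ = e x) :
    ∃ Z : Set X, IsClosed Z ∧ Y ⊆ interior Z ∧
      ∃ (p : C(Z, Mat n)) (s : C(Z, Mat n)),
        (∀ z, IsProjMat (p z)) ∧
        (∀ (x : X) (hy : x ∈ Y) (hz : x ∈ Z), p ⟨x, hz⟩ = p₀ ⟨x, hy⟩) ∧
        (∀ (x : X) (hz : x ∈ Z), p ⟨x, hz⟩ * q x = 0) ∧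
        (∀ (x : X) (hz : x ∈ Z),
          s ⟨x, hz⟩ * star (s ⟨x, hz⟩) = p ⟨x, hz⟩ ∧
          star (s ⟨x, hz⟩) * s ⟨x, hz⟩ = e x) ∧
        (∀ (x : X) (hy : x ∈ Y) (hz : x ∈ Z), s ⟨x, hz⟩ = s₀ ⟨x, hy⟩) := by
  classical
  haveI : Nonempty (Fin n) := ⟨⟨0, hn⟩⟩
  let φ : Mat n ≃⋆ₐ[ℂ] BOp n := Matrix.toEuclideanCLM (𝕜 := ℂ) (n := Fin n)
  let ℓ : Mat n ≃ₗ[ℂ] BOp n :=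
  { toFun := φ
    map_add' := fun x y => map_add φ x y
    map_smul' := fun r x => map_smul φ r x
    invFun := φ.symm
    left_inv := φ.symm_apply_apply
    right_inv := φ.apply_symm_apply }
  have hφc : Continuous (φ : Mat n → BOp n) := ℓ.toContinuousLinearEquiv.continuous
  have hφs : Continuous (φ.symm : BOp n → Mat n) :=
    ℓ.toContinuousLinearEquiv.symm.continuous
  obtain ⟨t, ht⟩ := s₀.exists_restrict_eq hY
  have ht' : ∀ (x : X) (hx : x ∈ Y), t x = s₀ ⟨x, hx⟩ := by
    intro x hx
    rw [← ht]
    rfl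
  have hc_cont : Continuous fun x => (1 - q x) * t x * e x := by
    apply Continuous.matrix_mul
    apply Continuous.matrix_mul
    · exact continuous_const.sub q.continuous
    · exact t.continuous
    · exact e.continuous
  let c : C(X, Mat n) := ⟨fun x => (1 - q x) * t x * e x, hc_cont⟩
  have hc_def : ∀ x, c x = (1 - q x) * t x * e x := fun x => rfl
  have hqc : ∀ x, q x * c x = 0 := by
    intro x
    have h1 : q x * (1 - q x) = 0 := by rw [mul_sub, mul_one, (hq x).1, sub_self]
    calc q x * c x = (q x * (1 - q x)) * (t x * e x) := by rw [hc_def]; noncomm_ring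
      _ = 0 := by rw [h1, zero_mul]
  have hce : ∀ x, c x * e x = c x := by
    intro x
    rw [hc_def, mul_assoc ((1 - q x) * t x) (e x) (e x), (he x).1]
  have hcy : ∀ (x : X) (hx : x ∈ Y), c x = s₀ ⟨x, hx⟩ := by
    intro x hx
    obtain ⟨hv1, hv2⟩ := hs₀ x hx
    set v := s₀ ⟨x, hx⟩ with hv
    have hvv : v * (star v * v) = v := by
      apply mat_partial_isometry
      rw [hv2]; exact (he x).1
    have hve : v * e x = v := by rw [← hv2]; exact hvv
    have hqp : q x * p₀ ⟨x, hx⟩ = 0 := by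
      have := congrArg star (horth x hx)
      rw [star_mul, star_zero, (hq x).2, (hp₀ ⟨x, hx⟩).2] at this
      exact this
    have hqv : q x * v = 0 := by
      have hv' : v = v * star v * v := by
        rw [mul_assoc]; exact hvv.symm
      calc q x * v = q x * (v * star v * v) := by rw [← hv']
        _ = (q x * p₀ ⟨x, hx⟩) * v := by rw [hv1]; noncomm_ring
        _ = 0 := by rw [hqp, zero_mul]
    calc c x = (1 - q x) * v * e x := by rw [hc_def, ht' x hx]
      _ = (v - q x * v) * e x := by noncomm_ring
      _ = v * e x := by rw [hqv, sub_zero]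
      _ = v := hve
  have hccy : ∀ (x : X) (hx : x ∈ Y), star (c x) * c x = e x := by
    intro x hx
    rw [hcy x hx]
    exact (hs₀ x hx).2
  have hNcont : Continuous fun x => ‖φ (star (c x) * c x - e x)‖ := by
    apply Continuous.norm
    apply hφc.comp
    apply Continuous.sub _ e.continuous
    exact (c.continuous.matrix_conjTranspose).matrix_mul c.continuous
  set Z : Set X := {x | ‖φ (star (c x) * c x - e x)‖ ≤ 1 / 2} with hZ_def
  have hZc : IsClosed Z := isClosed_le hNcont continuous_const
  have hYZ' : Y ⊆ {x | ‖φ (star (c x) * c x - e x)‖ < 1 / 2} := by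
    intro x hx
    show ‖φ (star (c x) * c x - e x)‖ < 1 / 2
    rw [hccy x hx, sub_self, map_zero, norm_zero]
    norm_num
  have hYint : Y ⊆ interior Z := fun x hx =>
    interior_maximal (fun y (hy : _ < _) => le_of_lt hy)
      (isOpen_lt hNcont continuous_const) (hYZ' hx)
  by_cases hZne : Nonempty Z
  swap
  · refine ⟨Z, hZc, hYint, 0, 0, ?_, ?_, ?_, ?_, ?_⟩
    · intro z; exact absurd ⟨z⟩ hZne
    · intro x hy hz; exact absurd ⟨⟨x, hz⟩⟩ hZne
    · intro x hz; exact absurd ⟨⟨x, hz⟩⟩ hZne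
    · intro x hz; exact absurd ⟨⟨x, hz⟩⟩ hZne
    · intro x hy hz; exact absurd ⟨⟨x, hz⟩⟩ hZne
  haveI : CompactSpace Z := isCompact_iff_compactSpace.mp (hZc.isCompact)
  haveI : ContinuousStar (BOp n) := ⟨(star_isometry (E := BOp n)).continuous⟩
  haveI : Nontrivial (BOp n) := by
    refine ⟨1, 0, fun h => ?_⟩
    have h1 := congrFun (congrArg DFunLike.coe h) (EuclideanSpace.single (⟨0, hn⟩ : Fin n) (1:ℂ))
    simp only [ContinuousLinearMap.one_apply, ContinuousLinearMap.zero_apply] at h1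
    have h2 : (EuclideanSpace.single (⟨0, hn⟩ : Fin n) (1:ℂ)) (⟨0, hn⟩ : Fin n) = 0 := by rw [h1]; rfl
    rw [EuclideanSpace.single_apply, if_pos rfl] at h2
    exact one_ne_zero h2
  haveI : Nontrivial C(Z, BOp n) := by
    obtain ⟨z₀⟩ := hZne
    refine ⟨1, 0, fun h => ?_⟩
    have h1 := ContinuousMap.congr_fun h z₀
    rw [ContinuousMap.one_apply, ContinuousMap.zero_apply] at h1
    exact one_ne_zero h1
  let c' : C(Z, BOp n) := ⟨fun z => φ (c z), hφc.comp (c.continuous.comp continuous_subtype_val)⟩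
  let e' : C(Z, BOp n) := ⟨fun z => φ (e z), hφc.comp (e.continuous.comp continuous_subtype_val)⟩
  let q' : C(Z, BOp n) := ⟨fun z => φ (q z), hφc.comp (q.continuous.comp continuous_subtype_val)⟩
  have hc'_def : ∀ z : Z, c' z = φ (c z) := fun z => rfl
  have he'_def : ∀ z : Z, e' z = φ (e z) := fun z => rfl
  have hq'_def : ∀ z : Z, q' z = φ (q z) := fun z => rfl
  have he'1 : e' * e' = e' := by
    refine ContinuousMap.ext fun z => ?_
    rw [ContinuousMap.mul_apply, he'_def, ← map_mul, (he z).1]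
  have he'2 : star e' = e' := by
    refine ContinuousMap.ext fun z => ?_
    rw [ContinuousMap.star_apply, he'_def, ← map_star, (he z).2]
  have hq'2 : star q' = q' := by
    refine ContinuousMap.ext fun z => ?_
    rw [ContinuousMap.star_apply, hq'_def, ← map_star, (hq z).2]
  have hc'e' : c' * e' = c' := by
    refine ContinuousMap.ext fun z => ?_
    rw [ContinuousMap.mul_apply, hc'_def, he'_def, ← map_mul, hce]
  have hq'c' : q' * c' = 0 := by
    refine ContinuousMap.ext fun z => ?_
    rw [ContinuousMap.mul_apply, hc'_def, hq'_def, ← map_mul, hqc, map_zero,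
      ContinuousMap.zero_apply]
  have hnormZ : ‖star c' * c' - e'‖ ≤ 1 / 2 := by
    rw [ContinuousMap.norm_le _ (by norm_num)]
    intro z
    have h2 : (star c' * c' - e') z = φ (star (c z) * c z - e z) := by
      rw [ContinuousMap.sub_apply, ContinuousMap.mul_apply, ContinuousMap.star_apply,
        hc'_def, he'_def, ← map_star, ← map_mul, ← map_sub]
    rw [h2]
    exact z.2
  obtain ⟨s', hss, hpp, hps, hpq, hqs, hpsi⟩ :=
    polar_partial_isometry c' e' q' he'1 he'2 hq'2 hc'e' hq'c' hnormZ
  have hs_z : ∀ (x : X) (hy : x ∈ Y) (hz : x ∈ Z), s' ⟨x, hz⟩ = φ (s₀ ⟨x, hy⟩) := by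
    intro x hy hz
    set z : Z := ⟨x, hz⟩ with hz_def
    let ev : C(Z, BOp n) →⋆ₐ[ℂ] BOp n :=
    { toFun := fun f => f z
      map_one' := rfl
      map_mul' := fun f g => rfl
      map_zero' := rfl
      map_add' := fun f g => rfl
      commutes' := fun r => rfl
      map_star' := fun f => rfl }
    have hev_cont : Continuous ev := by
      show Continuous fun f : C(Z, BOp n) => f z
      exact continuous_eval_const z
    have hev : ev (star c' * c') = ev e' := by
      show (star c' * c') z = e' z
      rw [ContinuousMap.mul_apply, ContinuousMap.star_apply, hc'_def, he'_def,
        ← map_star, ← map_mul]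
      congr 1
      exact hccy x hy
    have h := hpsi ev hev_cont hev
    have h' : s' z = c' z := h
    rw [h', hc'_def]
    congr 1
    exact hcy x hy
  refine ⟨Z, hZc, hYint,
    ⟨fun z => φ.symm ((s' * star s') z), hφs.comp (s' * star s').continuous⟩,
    ⟨fun z => φ.symm (s' z), hφs.comp s'.continuous⟩, ?_, ?_, ?_, ?_, ?_⟩
  · intro z
    constructor
    · simp only [ContinuousMap.coe_mk]
      rw [← map_mul]
      congr 1
      rw [← ContinuousMap.mul_apply]
      exact ContinuousMap.congr_fun hpp z
    · simp only [ContinuousMap.coe_mk]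
      rw [← map_star]
      congr 1
      rw [← ContinuousMap.star_apply]
      exact ContinuousMap.congr_fun hps z
  · intro x hy hz
    simp only [ContinuousMap.coe_mk]
    rw [ContinuousMap.mul_apply, ContinuousMap.star_apply, hs_z x hy hz, ← map_star,
      ← map_mul, (hs₀ x hy).1, φ.symm_apply_apply]
  · intro x hz
    simp only [ContinuousMap.coe_mk]
    have hqx : q x = φ.symm (q' ⟨x, hz⟩) := by rw [hq'_def, φ.symm_apply_apply]
    rw [hqx, ← map_mul, ← ContinuousMap.mul_apply, ContinuousMap.congr_fun hpq ⟨x, hz⟩,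
      ContinuousMap.zero_apply, map_zero]
  · intro x hz
    constructor
    · simp only [ContinuousMap.coe_mk]
      rw [← map_star, ← map_mul, ← ContinuousMap.star_apply, ← ContinuousMap.mul_apply]
    · simp only [ContinuousMap.coe_mk]
      rw [← map_star, ← map_mul, ← ContinuousMap.star_apply, ← ContinuousMap.mul_apply,
        ContinuousMap.congr_fun hss ⟨x, hz⟩, he'_def, φ.symm_apply_apply]
  · intro x hy hz
    simp only [ContinuousMap.coe_mk]
    rw [hs_z x hy hz, φ.symm_apply_apply]
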